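/- Within any block of the DTW pattern-matching table, values are non-decreasing downwards and rightwards: for a block B = D[i_p..j_p, i_t..j_t] and any cell (a,b) in B, if i_p ≤ a < j_p then D[a,b] ≤ D[a+1,b], and if i_t ≤ b < j_t then D[a,b] ≤ D[a,b+1]. -/

import Mathlib

open scoped ENNReal

private lemma le_min_add {x a b c : ℝ≥0∞} (h1 : x ≤ a + c) (h2 : x ≤ b + c) :
    x ≤ min a b + c := by
  rw [← min_add_add_right]; exact le_min h1 h2

private lemma dtw_vert {α : Type*} (d : α → α → ℝ≥0∞) (P T : ℕ → α)
    (D : ℕ → ℕ → ℝ≥0∞)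
    (hDi0 : ∀ i, 1 ≤ i → D i 0 = ⊤)
    (hrec : ∀ i j, 1 ≤ i → 1 ≤ j →
      D i j = min (min (D (i - 1) (j - 1)) (D (i - 1) j)) (D i (j - 1))
        + d (P i) (T j))
    (a : ℕ) (ha : 1 ≤ a) (hPa : P (a + 1) = P a) :
    ∀ b, D a b ≤ D (a + 1) b := by
  intro b
  induction b with
  | zero => rw [hDi0 a ha, hDi0 (a + 1) (by omega)]
  | succ b ih =>
    have hr := hrec (a + 1) (b + 1) (by omega) (by omega)
    simp only [Nat.add_sub_cancel] at hr
    have h1 : D a (b + 1) ≤ D a b + d (P a) (T (b + 1)) := by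
      have hr' := hrec a (b + 1) ha (by omega)
      simp only [Nat.add_sub_cancel] at hr'
      rw [hr']
      exact add_le_add_left (min_le_right _ _) _
    rw [hr, hPa]
    exact le_min_add (le_min_add h1 le_self_add) (h1.trans (add_le_add_left ih _))

private lemma dtw_horiz {α : Type*} (d : α → α → ℝ≥0∞) (P T : ℕ → α)
    (D : ℕ → ℕ → ℝ≥0∞)
    (hD0 : ∀ j, D 0 j = 0)
    (hrec : ∀ i j, 1 ≤ i → 1 ≤ j →
      D i j = min (min (D (i - 1) (j - 1)) (D (i - 1) j)) (D i (j - 1))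
        + d (P i) (T j))
    (b : ℕ) (hb : 1 ≤ b) (hTb : T (b + 1) = T b) :
    ∀ a, D a b ≤ D a (b + 1) := by
  intro a
  induction a with
  | zero => rw [hD0 b]; exact zero_le
  | succ a ih =>
    have hr := hrec (a + 1) (b + 1) (by omega) (by omega)
    simp only [Nat.add_sub_cancel] at hr
    have h1 : D (a + 1) b ≤ D a b + d (P (a + 1)) (T b) := by
      have hr' := hrec (a + 1) b (by omega) hb
      simp only [Nat.add_sub_cancel] at hr'
      rw [hr']
      exact add_le_add_left ((min_le_left _ _).trans (min_le_right _ _)) _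
    rw [hr, hTb]
    exact le_min_add (le_min_add h1 (h1.trans (add_le_add_left ih _))) le_self_add

/-- within any block of the DTW pattern-matching table (a rectangle on
which the pattern letters and text letters are constant, i.e. coming from runs, where
row 0 / column 0 may only occur as the degenerate blocks `i_p = j_p = 0`,
`i_t = j_t = 0`), values are non-decreasing downwards and rightwards. -/
theorem block_monotone {α : Type*} (d : α → α → ℝ≥0∞) (P T : ℕ → α)
    (hrefl : ∀ a, d a a = 0) (hpos : ∀ a b, a ≠ b → 0 < d a b)
    (D : ℕ → ℕ → ℝ≥0∞)
    (hD0 : ∀ j, D 0 j = 0) (hDi0 : ∀ i, 1 ≤ i → D i 0 = ⊤)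
    (hrec : ∀ i j, 1 ≤ i → 1 ≤ j →
      D i j = min (min (D (i - 1) (j - 1)) (D (i - 1) j)) (D i (j - 1))
        + d (P i) (T j))
    (ip jp it jt : ℕ) (hip0 : ip = 0 → jp = 0) (hit0 : it = 0 → jt = 0)
    (hP : ∀ x, ip ≤ x → x ≤ jp → P x = P ip)
    (hT : ∀ y, it ≤ y → y ≤ jt → T y = T it)
    (a b : ℕ) (ha1 : ip ≤ a) (ha2 : a ≤ jp) (hb1 : it ≤ b) (hb2 : b ≤ jt) :
    (a < jp → D a b ≤ D (a + 1) b) ∧ (b < jt → D a b ≤ D a (b + 1)) := by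
  constructor
  · intro hajp
    have hip : 1 ≤ ip := by
      by_contra h
      have : ip = 0 := by omega
      have := hip0 this
      omega
    have hPa : P (a + 1) = P a := by
      rw [hP (a + 1) (by omega) (by omega), hP a ha1 ha2]
    exact dtw_vert d P T D hDi0 hrec a (by omega) hPa b
  · intro hbjt
    have hit : 1 ≤ it := by
      by_contra h
      have : it = 0 := by omega
      have := hit0 this
      omega
    have hTb : T (b + 1) = T b := by
      rw [hT (b + 1) (by omega) (by omega), hT b hb1 hb2]
    exact dtw_horiz d P T D hD0 hrec b (by omega) hTb a
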